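/- For (b,c) = (2,3) and (a_1,a_2) = (3,4), the coefficient e(2,1) determined by the quantum greedy recurrence equals v^2 − 1 + v^{−2}; in particular it is not a polynomial with nonnegative coefficients. -/

import Mathlib

/-- The bar-invariant quantum integer `[n]_w = (w^n - w^(-n))/(w - w⁻¹)`. -/
noncomputable def qint {F : Type*} [Field F] (w : F) (n : ℤ) : F :=
  (w ^ n - w ^ (-n)) / (w - w⁻¹)

/-- The bar-invariant quantum binomial coefficient `[n choose k]_w`. -/
noncomputable def qbinom {F : Type*} [Field F] (w : F) (n : ℤ) (k : ℕ) : F :=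
  (∏ i ∈ Finset.range k, qint w (n - i)) / (∏ i ∈ Finset.range k, qint w (i + 1))

lemma coe_X_zpow_aux (n : ℤ) :
    ((RatFunc.X ^ n : RatFunc ℚ) : LaurentSeries ℚ) = HahnSeries.single n 1 := by
  rw [map_zpow₀, RatFunc.coe_X,
    ← RatFunc.single_zpow]

set_option maxHeartbeats 2000000 in
/-- for `(b,c) = (2,3)` and `(a₁,a₂) = (3,4)`, the quantum greedy
recurrence coefficient `e(2,1)` equals `v² - 1 + v⁻²`; in particular it is not a
Laurent polynomial with nonnegative coefficients.  Here `v = RatFunc.X`, the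
first branch applies when `c a₁ q ≤ b a₂ p` (i.e. `9 q ≤ 8 p`), the second when
`8 p ≤ 9 q`, and the binomial subscripts are `v^b = v²` and `v^c = v³`. -/
theorem quantum_greedy_not_positive_b2_c3
    (e : ℕ → ℕ → RatFunc ℚ)
    (h0 : e 0 0 = 1)
    (h1 : ∀ p q : ℕ, ¬(p = 0 ∧ q = 0) → 9 * q ≤ 8 * p →
      e p q = ∑ k ∈ Finset.Icc 1 p, (-1 : RatFunc ℚ) ^ (k - 1) * e (p - k) q *
        qbinom ((RatFunc.X : RatFunc ℚ) ^ (2 : ℤ)) (max (4 - 3 * (q : ℤ)) 0 + k - 1) k)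
    (h2 : ∀ p q : ℕ, ¬(p = 0 ∧ q = 0) → 8 * p ≤ 9 * q →
      e p q = ∑ l ∈ Finset.Icc 1 q, (-1 : RatFunc ℚ) ^ (l - 1) * e p (q - l) *
        qbinom ((RatFunc.X : RatFunc ℚ) ^ (3 : ℤ)) (max (3 - 2 * (p : ℤ)) 0 + l - 1) l) :
    e 2 1 = RatFunc.X ^ (2 : ℤ) - 1 + RatFunc.X ^ (-2 : ℤ) ∧
    e 2 1 ∉ AddSubmonoid.closure {f : RatFunc ℚ | ∃ n : ℤ, f = RatFunc.X ^ n} := by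
  have main : e 2 1 = RatFunc.X ^ (2 : ℤ) - 1 + RatFunc.X ^ (-2 : ℤ) := by
    have hX : (RatFunc.X : RatFunc ℚ) ≠ 0 := RatFunc.X_ne_zero
    have hne : ∀ n : ℤ, n ≠ 0 → (RatFunc.X : RatFunc ℚ) ^ n ≠ 1 := by
      intro n hn h
      have hc : ((RatFunc.X ^ n : RatFunc ℚ) : LaurentSeries ℚ) = 1 := by
        rw [h]; exact map_one _
      rw [map_zpow₀, RatFunc.coe_X,
        ← RatFunc.single_zpow] at hc
      have := congrArg (fun f : LaurentSeries ℚ => f.coeff n) hc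
      simp [HahnSeries.coeff_single_same, HahnSeries.coeff_one, hn] at this
    have hneN : ∀ n : ℕ, n ≠ 0 → (RatFunc.X : RatFunc ℚ) ^ n ≠ 1 := by
      intro n hn
      rw [← zpow_natCast]
      exact hne n (by exact_mod_cast hn)
    have key : ∀ m : ℕ, m ≠ 0 → (RatFunc.X : RatFunc ℚ) ^ m - ((RatFunc.X : RatFunc ℚ) ^ m)⁻¹ ≠ 0 := by
      intro m hm h
      apply hneN (2 * m) (by simp [hm])
      have h2 : (RatFunc.X : RatFunc ℚ) ^ m = ((RatFunc.X : RatFunc ℚ) ^ m)⁻¹ := sub_eq_zero.mp h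
      calc (RatFunc.X : RatFunc ℚ) ^ (2 * m) = RatFunc.X ^ m * RatFunc.X ^ m := by rw [two_mul, pow_add]
      _ = (RatFunc.X ^ m)⁻¹ * RatFunc.X ^ m := by rw [← h2]
      _ = 1 := inv_mul_cancel₀ (pow_ne_zero m hX)
    have keyZ : ∀ m : ℤ, m ≠ 0 → (RatFunc.X : RatFunc ℚ) ^ m - ((RatFunc.X : RatFunc ℚ) ^ m)⁻¹ ≠ 0 := by
      intro m hm h
      apply hne (2 * m) (by simp [hm])
      have h2 : (RatFunc.X : RatFunc ℚ) ^ m = ((RatFunc.X : RatFunc ℚ) ^ m)⁻¹ := sub_eq_zero.mp h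
      calc (RatFunc.X : RatFunc ℚ) ^ (2 * m) = RatFunc.X ^ m * RatFunc.X ^ m := by
            rw [two_mul, zpow_add₀ hX]
      _ = (RatFunc.X ^ m)⁻¹ * RatFunc.X ^ m := by rw [← h2]
      _ = 1 := inv_mul_cancel₀ (zpow_ne_zero m hX)
    have e10 := h1 1 0 (by simp) (by norm_num)
    have e01 := h2 0 1 (by simp) (by norm_num)
    have e11 := h2 1 1 (by simp) (by norm_num)
    have e21 := h1 2 1 (by simp) (by norm_num)
    simp only [Finset.Icc_self, Finset.sum_singleton, show Finset.Icc 1 2 = {1, 2} by decide,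
      Finset.sum_pair (by norm_num : (1:ℕ) ≠ 2)] at e10 e01 e11 e21
    norm_num [h0] at e10 e01 e11 e21
    rw [e10] at e11
    rw [e11, e01] at e21
    simp only [qbinom, qint, Finset.prod_range_succ, Finset.prod_range_zero, one_mul] at e21
    norm_num at e21
    simp only [← zpow_mul, ← pow_mul] at e21
    norm_num [div_self (key 2 (by norm_num)), div_self (key 3 (by norm_num)),
      div_self (div_ne_zero (key 4 (by norm_num)) (key 2 (by norm_num))),
      div_self (keyZ 2 (by norm_num)), div_self (keyZ 3 (by norm_num)),
      div_self (div_ne_zero (keyZ 4 (by norm_num)) (keyZ 2 (by norm_num)))] at e21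
    rw [e21]
    norm_num
    have k2 := key 2 (by norm_num)
    have k3 := key 3 (by norm_num)
    have kz2 := keyZ 2 (by norm_num)
    have kz3 := keyZ 3 (by norm_num)
    rw [← sub_eq_add_neg]
    first
    | rw [div_sub_div _ _ k2 k3, div_eq_iff (mul_ne_zero k2 k3)]
    | rw [div_sub_div _ _ kz2 kz3, div_eq_iff (mul_ne_zero kz2 kz3)]
    have p2 : (RatFunc.X : RatFunc ℚ) ^ (2:ℕ) ≠ 0 := pow_ne_zero _ hX
    have p3 : (RatFunc.X : RatFunc ℚ) ^ (3:ℕ) ≠ 0 := pow_ne_zero _ hX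
    have p8 : (RatFunc.X : RatFunc ℚ) ^ (8:ℕ) ≠ 0 := pow_ne_zero _ hX
    have p9 : (RatFunc.X : RatFunc ℚ) ^ (9:ℕ) ≠ 0 := pow_ne_zero _ hX
    have z2 : (RatFunc.X : RatFunc ℚ) ^ (2:ℤ) ≠ 0 := zpow_ne_zero _ hX
    have z3 : (RatFunc.X : RatFunc ℚ) ^ (3:ℤ) ≠ 0 := zpow_ne_zero _ hX
    have z8 : (RatFunc.X : RatFunc ℚ) ^ (8:ℤ) ≠ 0 := zpow_ne_zero _ hX
    have z9 : (RatFunc.X : RatFunc ℚ) ^ (9:ℤ) ≠ 0 := zpow_ne_zero _ hX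
    field_simp
    ring
  refine ⟨main, ?_⟩
  intro hm
  have hpos : 0 ≤ ((e 2 1 : RatFunc ℚ) : LaurentSeries ℚ).coeff 0 := by
    refine AddSubmonoid.closure_induction ?_ ?_ ?_ hm
    · rintro f ⟨n, rfl⟩
      rw [coe_X_zpow_aux, HahnSeries.coeff_single]
      split <;> norm_num
    · simp
    · intro a b _ _ ha hb
      rw [map_add, HahnSeries.coeff_add]
      exact add_nonneg ha hb
  rw [main, map_add, map_sub, map_one, coe_X_zpow_aux, coe_X_zpow_aux,
    HahnSeries.coeff_add, HahnSeries.coeff_sub] at hpos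
  simp [HahnSeries.coeff_single, HahnSeries.coeff_one] at hpos
  exact absurd hpos (by norm_num)
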